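/- Let W, W_q ∈ ℝ^{n×n} be arbitrary and let W_obj ∈ ℝ^{n×n} be symmetric positive semidefinite. If Wᵀ·W_q + W_qᵀ·W − W_qᵀ·W_q ⪰ W_obj (i.e. the difference is positive semidefinite), then WᵀW ⪰ W_obj, and consequently det(W_obj) ≤ (det W)². -/

import Mathlib

open Matrix

private lemma psd_det_nonneg {n : ℕ} {A : Matrix (Fin n) (Fin n) ℝ}
    (hA : A.PosSemidef) : 0 ≤ A.det := by
  rw [hA.isHermitian.det_eq_prod_eigenvalues]
  exact Finset.prod_nonneg fun i _ => by exact_mod_cast hA.eigenvalues_nonneg i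

private lemma det_mono {n : ℕ} {A B : Matrix (Fin n) (Fin n) ℝ}
    (hB : B.PosSemidef) (hAB : (A - B).PosSemidef) : B.det ≤ A.det := by
  have hA : A.PosSemidef := by simpa using hAB.add hB
  by_cases hdet : A.det = 0
  · -- A singular: B is singular too
    obtain ⟨x, hx0, hx⟩ := (Matrix.exists_mulVec_eq_zero_iff).mpr hdet
    have h1 : star x ⬝ᵥ A *ᵥ x = 0 := by rw [hx, dotProduct_zero]
    have h2 : star x ⬝ᵥ (A - B) *ᵥ x = star x ⬝ᵥ A *ᵥ x - star x ⬝ᵥ B *ᵥ x := by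
      rw [sub_mulVec, dotProduct_sub]
    have h3 : star x ⬝ᵥ B *ᵥ x = 0 := by
      have := hAB.dotProduct_mulVec_nonneg x
      have := hB.dotProduct_mulVec_nonneg x
      rw [h2, h1] at *
      linarith [hAB.dotProduct_mulVec_nonneg x, hB.dotProduct_mulVec_nonneg x]
    have hBx : B *ᵥ x = 0 := (hB.dotProduct_mulVec_zero_iff x).mp h3
    have : B.det = 0 := (Matrix.exists_mulVec_eq_zero_iff).mp ⟨x, hx0, hBx⟩
    rw [this, hdet]
  · -- A invertible
    open scoped MatrixOrder in set S := CFC.sqrt A with hS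
    open scoped MatrixOrder in have hSpsd : S.PosSemidef := (CFC.sqrt_nonneg A).posSemidef
    open scoped MatrixOrder in have hSS : S * S = A := CFC.sqrt_mul_sqrt_self A hA.nonneg
    have hSdet : S.det ≠ 0 := by
      intro h0
      apply hdet
      rw [← hSS, det_mul, h0, mul_zero]
    have hSinv : S⁻¹ * S = 1 := nonsing_inv_mul S (isUnit_iff_ne_zero.mpr hSdet)
    have hSinv' : S * S⁻¹ = 1 := mul_nonsing_inv S (isUnit_iff_ne_zero.mpr hSdet)
    have hSH : S⁻¹ᴴ = S⁻¹ := by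
      rw [conjTranspose_nonsing_inv, hSpsd.isHermitian.eq]
    set M := S⁻¹ * B * S⁻¹ with hM
    have hMpsd : M.PosSemidef := by
      have := hB.mul_mul_conjTranspose_same S⁻¹
      rwa [hSH] at this
    have hNpsd : (1 - M).PosSemidef := by
      have := hAB.mul_mul_conjTranspose_same S⁻¹
      rw [hSH] at this
      have heq : S⁻¹ * (A - B) * S⁻¹ = 1 - M := by
        rw [← hSS, hM]
        rw [Matrix.mul_sub, Matrix.sub_mul]
        congr 1
        rw [← Matrix.mul_assoc, Matrix.mul_assoc (S⁻¹ * S), hSinv', Matrix.mul_one, hSinv]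
      rwa [heq] at this
    -- eigenvalues of M are in [0,1]
    have hdetM : M.det ≤ 1 := by
      rw [hMpsd.isHermitian.det_eq_prod_eigenvalues]
      refine Finset.prod_le_one (fun i _ => by exact_mod_cast hMpsd.eigenvalues_nonneg i)
        (fun i _ => ?_)
      have : hMpsd.isHermitian.eigenvalues i ≤ 1 := by
        set v := hMpsd.isHermitian.eigenvectorBasis i with hv
        have hquad := hNpsd.dotProduct_mulVec_nonneg ⇑v
        rw [sub_mulVec, dotProduct_sub, one_mulVec] at hquad
        have hvv : star ⇑v ⬝ᵥ ⇑v = 1 := by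
          have h1 : (inner ℝ v v : ℝ) = 1 := by
            rw [real_inner_self_eq_norm_sq,
              hMpsd.isHermitian.eigenvectorBasis.orthonormal.1 i]
            norm_num
          rwa [EuclideanSpace.inner_eq_star_dotProduct] at h1
        have heig := hMpsd.isHermitian.eigenvalues_eq i
        simp only [RCLike.re_to_real] at heig
        rw [heig, ← hv]
        rw [hvv] at hquad
        linarith
      exact_mod_cast this
    have hBM : B = S * M * S := by
      rw [hM, ← Matrix.mul_assoc, ← Matrix.mul_assoc, hSinv', Matrix.one_mul,
        Matrix.mul_assoc, hSinv, Matrix.mul_one]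
    calc B.det = S.det * M.det * S.det := by rw [hBM, det_mul, det_mul]
      _ = A.det * M.det := by rw [← hSS, det_mul S S]; ring
      _ ≤ A.det * 1 := by
          exact mul_le_mul_of_nonneg_left hdetM (psd_det_nonneg hA)
      _ = A.det := mul_one _

/-- **Iterative volume-increase condition.**
If `Wᵀ·W_q + W_qᵀ·W − W_qᵀ·W_q ⪰ W_obj` with `W_obj` symmetric positive semidefinite,
then `WᵀW ⪰ W_obj` and consequently `det W_obj ≤ (det W)²`. -/
theorem volume_increase_of_linearized_bound (n : ℕ)
    (W Wq Wobj : Matrix (Fin n) (Fin n) ℝ)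
    (hobj : Wobj.PosSemidef)
    (h : (Wᵀ * Wq + Wqᵀ * W - Wqᵀ * Wq - Wobj).PosSemidef) :
    (Wᵀ * W - Wobj).PosSemidef ∧ Wobj.det ≤ W.det ^ 2 := by
  have hkey : (Wᵀ * W - Wobj).PosSemidef := by
    have hsq : ((W - Wq)ᴴ * (W - Wq)).PosSemidef := posSemidef_conjTranspose_mul_self (W - Wq)
    have heq : (W - Wq)ᴴ * (W - Wq) + (Wᵀ * Wq + Wqᵀ * W - Wqᵀ * Wq - Wobj)
        = Wᵀ * W - Wobj := by
      have : (W - Wq)ᴴ = Wᵀ - Wqᵀ := by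
        rw [conjTranspose_sub]
        congr 1
      rw [this, Matrix.sub_mul, Matrix.mul_sub, Matrix.mul_sub]
      abel
    have := hsq.add h
    rwa [heq] at this
  refine ⟨hkey, ?_⟩
  have := det_mono hobj hkey
  rwa [det_mul, det_transpose, ← sq] at this
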